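/- Let G be a finite group, k any field, and V a finite-dimensional faithful representation of G over k. Then the polynomials of degree at most |G| − 1 span k(V) as a k(V)^G-vector space; that is, D_span(G,V) ≤ |G| − 1. -/

import Mathlib

open MvPolynomial

set_option synthInstance.maxHeartbeats 1000000
set_option maxHeartbeats 1000000

section

variable (k : Type*) [Field k] (n : ℕ) (G : Type*) [Group G] [Fintype G]
  [MulSemiringAction G (MvPolynomial (Fin n) k)]
  [MulSemiringAction G (FractionRing (MvPolynomial (Fin n) k))]

local notation "𝔸" => MvPolynomial (Fin n) k
local notation "𝔽" => FractionRing (MvPolynomial (Fin n) k)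
local notation "𝕂" => FixedPoints.subfield G (FractionRing (MvPolynomial (Fin n) k))
local notation "ιF" =>
  algebraMap (MvPolynomial (Fin n) k) (FractionRing (MvPolynomial (Fin n) k))

/-- Total degree of a product of variables is at most the number of factors. -/
private lemma aux_totalDegree_le (l : List (Fin n)) :
    ((l.map (X : Fin n → 𝔸)).prod).totalDegree ≤ l.length := by
  induction l with
  | nil => simp
  | cons a t ih =>
      simp only [List.map_cons, List.prod_cons, List.length_cons]
      calc ((X a : 𝔸) * (t.map (X : Fin n → 𝔸)).prod).totalDegree
          ≤ (X a : 𝔸).totalDegree + ((t.map (X : Fin n → 𝔸)).prod).totalDegree :=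
            totalDegree_mul _ _
        _ ≤ 1 + t.length := by
            rw [totalDegree_X]
            omega
        _ ≤ t.length + 1 := by omega

/-- Every monic monomial is a product of variables. -/
private lemma aux_monomial_eq_prod (a : Fin n →₀ ℕ) :
    ∃ l : List (Fin n), ((l.map (X : Fin n → 𝔸)).prod) = monomial a 1 := by
  induction a using Finsupp.induction with
  | zero => exact ⟨[], by simp⟩
  | single_add i b f _ _ ih =>
      obtain ⟨l, hl⟩ := ih
      refine ⟨List.replicate b i ++ l, ?_⟩
      rw [List.map_append, List.prod_append, hl, List.map_replicate, List.prod_replicate,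
        monomial_single_add]

/-- **Theorem (`D_span ≤ |G| - 1`, any characteristic).** Let `G` be a finite group, `k` any
field, and `V` a finite-dimensional faithful representation of `G` over `k`.  Then the
polynomials of degree at most `|G| - 1` span `k(V)` as a `k(V)^G`-vector space; that is,
`D_span(G,V) ≤ |G| - 1`. -/
theorem spanning_degree_le_card_sub_one
    [SMulCommClass G k (MvPolynomial (Fin n) k)]
    (hlin : ∀ (g : G) (i : Fin n), ((g • (X i : 𝔸)).IsHomogeneous 1))
    (hfaithful : ∀ g : G, (∀ p : 𝔸, g • p = p) → g = 1)
    (hcomp : ∀ (g : G) (p : 𝔸), g • (ιF p) = ιF (g • p)) :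
    Submodule.span 𝕂 (ιF '' {p : 𝔸 | p.totalDegree ≤ Fintype.card G - 1}) = ⊤ ∧
    sInf {e : ℕ | Submodule.span 𝕂 (ιF '' {p : 𝔸 | p.totalDegree ≤ e}) = ⊤}
      ≤ Fintype.card G - 1 := by
  classical
  set m := Fintype.card G with hm
  have hm1 : 1 ≤ m := Fintype.card_pos
  set W : Submodule 𝕂 𝔽 :=
    Submodule.span 𝕂 (ιF '' {p : 𝔸 | p.totalDegree ≤ m - 1}) with hW
  -- constants are G-fixed
  have hC : ∀ (g : G) (c : k), g • (C c : 𝔸) = C c := by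
    intro g c
    have h1 : (C c : 𝔸) = c • (1 : 𝔸) := by rw [smul_eq_C_mul, mul_one]
    rw [h1, smul_comm g c (1 : 𝔸), smul_one]
  -- images of G-fixed polynomials are in 𝕂
  have hfix : ∀ p : 𝔸, (∀ g : G, g • p = p) → ιF p ∈ 𝕂 := by
    intro p hp g
    rw [hcomp, hp]
  -- finrank bound
  have hrank : Module.finrank 𝕂 𝔽 ≤ m := FixedPoints.finrank_le_card G 𝔽
  -- key reduction lemma
  have hXmem : ∀ (N : ℕ) (l : List (Fin n)), l.length = N →
      ιF ((l.map (X : Fin n → 𝔸)).prod) ∈ W := by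
    intro N
    induction N using Nat.strong_induction_on with
    | _ N IH =>
      intro l hl
      by_cases hlen : l.length ≤ m - 1
      · exact Submodule.subset_span ⟨(l.map (X : Fin n → 𝔸)).prod,
          le_trans (aux_totalDegree_le k n l) hlen, rfl⟩
      · have hml : m ≤ l.length := by omega
        set v : Fin (m + 1) → 𝔽 :=
          fun j => ιF (((l.take (j : ℕ)).map (X : Fin n → 𝔸)).prod) with hv
        have hdep : ¬ LinearIndependent 𝕂 v := by
          intro h
          have := h.fintype_card_le_finrank
          simp [Fintype.card_fin] at this
          omega
        obtain ⟨c, hsum, i0, hi0⟩ := Fintype.not_linearIndependent_iff.mp hdep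
        set s : Finset (Fin (m + 1)) := Finset.univ.filter (fun i => c i ≠ 0) with hs
        have hsne : s.Nonempty := ⟨i0, by simp [hs, hi0]⟩
        set j : Fin (m + 1) := s.max' hsne with hj
        have hcj : c j ≠ 0 := (Finset.mem_filter.mp (s.max'_mem hsne)).2
        have hmax : ∀ i, c i ≠ 0 → i ≤ j := by
          intro i hi
          exact s.le_max' i (by simp [hs, hi])
        -- express v j in terms of the other partial products
        have hvj : v j = ∑ i ∈ Finset.univ.erase j, (-(c j)⁻¹ * c i) • v i := by
          have h1 : c j • v j + ∑ i ∈ Finset.univ.erase j, c i • v i = 0 :=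
            (Finset.add_sum_erase Finset.univ (fun i => c i • v i)
              (Finset.mem_univ j)).trans hsum
          have h2 : ∑ i ∈ Finset.univ.erase j, c i • v i = -(c j • v j) := by
            linear_combination (norm := module) h1
          calc v j = (c j)⁻¹ • (c j • v j) := (inv_smul_smul₀ hcj _).symm
            _ = (-(c j)⁻¹) • (-(c j • v j)) := by rw [smul_neg, neg_smul, neg_neg]
            _ = (-(c j)⁻¹) • ∑ i ∈ Finset.univ.erase j, c i • v i := by rw [h2]
            _ = ∑ i ∈ Finset.univ.erase j, (-(c j)⁻¹ * c i) • v i := by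
                rw [Finset.smul_sum]
                exact Finset.sum_congr rfl fun i _ => (mul_smul _ _ _).symm
        -- split the product
        have hkey : ιF ((l.map (X : Fin n → 𝔸)).prod)
            = ∑ i ∈ Finset.univ.erase j, (-(c j)⁻¹ * c i) •
                (v i * ιF (((l.drop (j : ℕ)).map (X : Fin n → 𝔸)).prod)) := by
          conv_lhs => rw [← List.take_append_drop (j : ℕ) l]
          rw [List.map_append, List.prod_append, map_mul]
          show v j * _ = _
          rw [hvj, Finset.sum_mul]
          exact Finset.sum_congr rfl fun i _ => smul_mul_assoc _ _ _
        rw [hkey]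
        apply Submodule.sum_mem
        intro i hi
        by_cases hci : c i = 0
        · rw [hci, mul_zero, zero_smul]
          exact W.zero_mem
        · have hij : (i : ℕ) < (j : ℕ) := by
            have h1 : i ≤ j := hmax i hci
            have h2 : i ≠ j := Finset.ne_of_mem_erase hi
            exact lt_of_le_of_ne h1 (fun h => h2 (Fin.ext h))
          have hterm : v i * ιF (((l.drop (j : ℕ)).map (X : Fin n → 𝔸)).prod)
              = ιF ((((l.take (i : ℕ) ++ l.drop (j : ℕ))).map (X : Fin n → 𝔸)).prod) := by
            rw [List.map_append, List.prod_append, map_mul]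
          rw [hterm]
          apply Submodule.smul_mem
          refine IH ((l.take (i : ℕ) ++ l.drop (j : ℕ)).length) ?_ _ rfl
          have hjm : (j : ℕ) ≤ m := by omega
          have him : (i : ℕ) ≤ l.length := by omega
          simp only [List.length_append, List.length_take, List.length_drop]
          omega
  -- every polynomial is in W
  have hpoly : ∀ p : 𝔸, ιF p ∈ W := by
    intro p
    rw [p.as_sum, map_sum]
    apply Submodule.sum_mem
    intro a _
    obtain ⟨l, hl⟩ := aux_monomial_eq_prod k n a
    have hmm : (monomial a (coeff a p) : 𝔸)
        = C (coeff a p) * (l.map (X : Fin n → 𝔸)).prod := by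
      rw [hl, C_mul_monomial, mul_one]
    have hCfix : ιF (C (coeff a p) : 𝔸) ∈ 𝕂 := hfix _ (fun g => hC g _)
    have heq : ιF ((monomial a (coeff a p) : 𝔸))
        = (⟨ιF (C (coeff a p) : 𝔸), hCfix⟩ : 𝕂) • ιF ((l.map (X : Fin n → 𝔸)).prod) := by
      rw [hmm, map_mul]
      rfl
    rw [heq]
    exact Submodule.smul_mem _ _ (hXmem _ l rfl)
  -- W is everything
  have htop : W = ⊤ := by
    rw [eq_top_iff]
    rintro x -
    obtain ⟨p, q, hq, hz⟩ := IsFractionRing.div_surjective (A := 𝔸) x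
    have hq0 : q ≠ 0 := nonZeroDivisors.ne_zero hq
    have hιq : ιF q ≠ 0 := fun h => hq0 (IsFractionRing.injective 𝔸 𝔽 (by rw [h, map_zero]))
    set M : 𝔸 := ∏ g ∈ Finset.univ.erase (1 : G), g • q with hM
    set Nq : 𝔸 := ∏ g : G, g • q with hNq
    have hNqM : Nq = q * M := by
      rw [hNq, hM, ← Finset.mul_prod_erase Finset.univ (fun g : G => g • q) (Finset.mem_univ 1),
        one_smul]
    have hsmul_ne : ∀ g : G, g • q ≠ 0 := by
      intro g h
      apply hq0
      have := congrArg (fun r => g⁻¹ • r) h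
      simpa [inv_smul_smul] using this
    have hNq0 : Nq ≠ 0 := Finset.prod_ne_zero_iff.mpr fun g _ => hsmul_ne g
    have hNfix : ∀ g0 : G, g0 • Nq = Nq := by
      intro g0
      rw [hNq]
      have h1 : g0 • (∏ g : G, g • q) = ∏ g : G, g0 • (g • q) := by
        exact map_prod (MulSemiringAction.toRingHom G 𝔸 g0) _ _
      rw [h1]
      have h2 : ∀ g : G, g0 • (g • q) = (g0 * g) • q := fun g => (mul_smul g0 g q).symm
      simp_rw [h2]
      exact Fintype.prod_equiv (Equiv.mulLeft g0) _ _ (fun g => rfl)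
    have hNfixF : ιF Nq ∈ 𝕂 := hfix Nq hNfix
    set nK : 𝕂 := ⟨ιF Nq, hNfixF⟩ with hnK
    have hnK0 : nK ≠ 0 := by
      intro h
      apply hNq0
      apply IsFractionRing.injective 𝔸 𝔽
      rw [map_zero]
      exact congrArg Subtype.val h
    have hιM : ιF M ≠ 0 := by
      intro h
      have hM0 : M ≠ 0 := Finset.prod_ne_zero_iff.mpr fun g _ => hsmul_ne g
      exact hM0 (IsFractionRing.injective 𝔸 𝔽 (by rw [h, map_zero]))
    have hx : x = nK⁻¹ • ιF (p * M) := by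
      have hcoe : ((nK⁻¹ : 𝕂) : 𝔽) = (ιF Nq)⁻¹ := rfl
      show x = ((nK⁻¹ : 𝕂) : 𝔽) * ιF (p * M)
      rw [hcoe, ← hz, map_mul, hNqM, map_mul]
      field_simp
    rw [hx]
    exact Submodule.smul_mem _ _ (hpoly (p * M))
  refine ⟨htop, Nat.sInf_le ?_⟩
  exact htop

end
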